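/- Let A ⊆ F_q be finite and nonempty, set B := A + A, and suppose E(A², (A-B)²) ≤ |A|^{3-ε} |B|² for some ε > 0, where E(A², (A-B)²) is the number of 6-tuples (a₁, a₂, b₁, a₃, a₄, b₂) ∈ (A × A × B)² with a₁² + (a₂ - b₁)² = a₃² + (a₄ - b₂)². Then max{|A + A|, |A² + A²|} ≫ |A|^{1 + ε/3}, i.e. |A+A|² · |A²+A²| ≥ |A|^{3+ε}. -/

import Mathlib

open Pointwise Finset

/-- `E(A², (A-B)²)`: the number of 6-tuples `(a₁, a₂, b₁, a₃, a₄, b₂) ∈ (A × A × B)²`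
with `a₁² + (a₂ - b₁)² = a₃² + (a₄ - b₂)²`. -/
def energyDist {F : Type*} [DecidableEq F] [Field F] (A B : Finset F) : ℕ :=
  (((A ×ˢ A ×ˢ B) ×ˢ A ×ˢ A ×ˢ B).filter (fun p =>
    p.1.1 ^ 2 + (p.1.2.1 - p.1.2.2) ^ 2 = p.2.1 ^ 2 + (p.2.2.1 - p.2.2.2) ^ 2)).card

theorem small_energy_implies_sum_product {F : Type*} [Field F] [Fintype F] [DecidableEq F]
    (A : Finset F) (hA : A.Nonempty) (ε : ℝ) (hε : 0 < ε)
    (hE : (energyDist A (A + A) : ℝ)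
      ≤ (A.card : ℝ) ^ ((3 : ℝ) - ε) * ((A + A).card : ℝ) ^ 2) :
    (A.card : ℝ) ^ ((3 : ℝ) + ε)
      ≤ ((A + A).card : ℝ) ^ 2
        * ((A.image (fun x => x ^ 2) + A.image (fun x => x ^ 2)).card : ℝ) := by
  classical
  set B := A + A with hB
  set S := A.image (fun x => x ^ 2) + A.image (fun x => x ^ 2) with hS
  set P := A ×ˢ A ×ˢ B with hP
  set f : F × F × F → F := fun p => p.1 ^ 2 + (p.2.1 - p.2.2) ^ 2 with hf
  set r : F → ℕ := fun x => (P.filter (fun p => f p = x)).card with hr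
  have hdisj : ∀ (T : Finset F), ∀ x ∈ T, ∀ y ∈ T, x ≠ y →
      Disjoint (P.filter (fun p => f p = x)) (P.filter (fun p => f p = y)) := by
    intro T x _ y _ hxy
    rw [Finset.disjoint_left]
    intro p hp hp'
    simp only [Finset.mem_filter] at hp hp'
    exact hxy (hp.2 ▸ hp'.2)
  -- Step 1 : |A|^3 ≤ ∑_{x ∈ S} r x
  have h1 : A.card ^ 3 ≤ ∑ x ∈ S, r x := by
    have hcard : (A ×ˢ A ×ˢ A).card = A.card ^ 3 := by
      simp [Finset.card_product]; ring
    rw [← hcard, hr, ← Finset.card_biUnion (hdisj S)]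
    apply Finset.card_le_card_of_injOn (fun p => (p.1, p.2.1, p.2.1 + p.2.2))
    · intro p hp
      simp only [Finset.mem_coe, Finset.mem_product] at hp
      obtain ⟨h1, h2, h3⟩ := hp
      rw [Finset.mem_coe, Finset.mem_biUnion]
      refine ⟨p.1 ^ 2 + p.2.2 ^ 2, ?_, ?_⟩
      · rw [hS, Finset.mem_add]
        exact ⟨p.1 ^ 2, Finset.mem_image_of_mem _ h1,
          p.2.2 ^ 2, Finset.mem_image_of_mem _ h3, rfl⟩
      · rw [Finset.mem_filter]
        constructor
        · rw [hP]
          simp only [Finset.mem_product]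
          exact ⟨h1, h2, hB ▸ Finset.add_mem_add h2 h3⟩
        · simp only [hf]
          ring
    · intro p _ q _ h
      simp only [Prod.mk.injEq] at h
      obtain ⟨e1, e2, e3⟩ := h
      have : p.2.2 = q.2.2 := by
        have := e3
        rw [e2] at this
        exact add_left_cancel this
      exact Prod.ext e1 (Prod.ext e2 this)
  -- Step 2 : energy = ∑_{x ∈ image} r x ^ 2
  have h2 : energyDist A B = ∑ x ∈ P.image f, r x ^ 2 := by
    have hset : ((P ×ˢ P).filter (fun q => f q.1 = f q.2)) =
        (P.image f).biUnion
          (fun x => (P.filter (fun p => f p = x)) ×ˢ (P.filter (fun p => f p = x))) := by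
      ext q
      simp only [Finset.mem_filter, Finset.mem_biUnion, Finset.mem_image,
        Finset.mem_product]
      constructor
      · rintro ⟨⟨hq1, hq2⟩, heq⟩
        exact ⟨f q.1, ⟨q.1, hq1, rfl⟩, ⟨hq1, rfl⟩, ⟨hq2, heq.symm⟩⟩
      · rintro ⟨x, -, ⟨hq1, e1⟩, hq2, e2⟩
        exact ⟨⟨hq1, hq2⟩, by rw [e1, e2]⟩
    have hdisj2 : ∀ x ∈ P.image f, ∀ y ∈ P.image f, x ≠ y →
        Disjoint ((P.filter (fun p => f p = x)) ×ˢ (P.filter (fun p => f p = x)))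
          ((P.filter (fun p => f p = y)) ×ˢ (P.filter (fun p => f p = y))) := by
      intro x hx y hy hxy
      exact Finset.disjoint_product.2 (Or.inl (hdisj _ x hx y hy hxy))
    have : energyDist A B = ((P ×ˢ P).filter (fun q => f q.1 = f q.2)).card := rfl
    rw [this, hset, Finset.card_biUnion hdisj2]
    apply Finset.sum_congr rfl
    intro x _
    rw [Finset.card_product, sq]
  -- Step 3 : ∑_{x ∈ S} r x ^ 2 ≤ energy
  have h3 : ∑ x ∈ S, r x ^ 2 ≤ energyDist A B := by
    rw [h2]
    rw [← Finset.sum_filter_add_sum_filter_not S (fun x => x ∈ P.image f)]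
    have hz : ∑ x ∈ S.filter (fun x => ¬ x ∈ P.image f), r x ^ 2 = 0 := by
      apply Finset.sum_eq_zero
      intro x hx
      simp only [Finset.mem_filter, Finset.mem_image] at hx
      have : P.filter (fun p => f p = x) = ∅ := by
        rw [Finset.filter_eq_empty_iff]
        intro p hp hfp
        exact hx.2 ⟨p, hp, hfp⟩
      simp [hr, this]
    rw [hz, add_zero]
    apply Finset.sum_le_sum_of_subset
    intro x hx
    exact (Finset.mem_filter.1 hx).2
  -- Cauchy–Schwarz in ℝ
  have hCS : ((A.card : ℝ) ^ 3) ^ 2 ≤ (S.card : ℝ) * (energyDist A B : ℝ) := by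
    have c1 : ((A.card : ℝ) ^ 3) ^ 2 ≤ ((∑ x ∈ S, r x : ℕ) : ℝ) ^ 2 := by
      have := h1
      gcongr
      exact_mod_cast this
    have c2 : ((∑ x ∈ S, r x : ℕ) : ℝ) ^ 2 ≤ (S.card : ℝ) * ∑ x ∈ S, (r x : ℝ) ^ 2 := by
      push_cast
      exact sq_sum_le_card_mul_sum_sq
    have c3 : ∑ x ∈ S, (r x : ℝ) ^ 2 ≤ (energyDist A B : ℝ) := by
      exact_mod_cast h3
    calc ((A.card : ℝ) ^ 3) ^ 2 ≤ ((∑ x ∈ S, r x : ℕ) : ℝ) ^ 2 := c1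
      _ ≤ (S.card : ℝ) * ∑ x ∈ S, (r x : ℝ) ^ 2 := c2
      _ ≤ (S.card : ℝ) * (energyDist A B : ℝ) := by
          apply mul_le_mul_of_nonneg_left c3 (by positivity)
  -- final arithmetic
  have hApos : (0 : ℝ) < A.card := by exact_mod_cast hA.card_pos
  have hkey : (A.card : ℝ) ^ (6 : ℝ) ≤
      (S.card : ℝ) * ((A.card : ℝ) ^ ((3 : ℝ) - ε) * (B.card : ℝ) ^ 2) := by
    have : ((A.card : ℝ) ^ 3) ^ 2 = (A.card : ℝ) ^ (6 : ℝ) := by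
      rw [← Real.rpow_natCast (A.card : ℝ) 3, ← Real.rpow_natCast _ 2,
        ← Real.rpow_mul hApos.le]
      norm_num
    rw [← this]
    calc ((A.card : ℝ) ^ 3) ^ 2 ≤ (S.card : ℝ) * (energyDist A B : ℝ) := hCS
      _ ≤ (S.card : ℝ) * ((A.card : ℝ) ^ ((3 : ℝ) - ε) * (B.card : ℝ) ^ 2) := by
          apply mul_le_mul_of_nonneg_left hE (by positivity)
  have hpow : (0 : ℝ) < (A.card : ℝ) ^ ((3 : ℝ) - ε) := Real.rpow_pos_of_pos hApos _
  rw [← mul_le_mul_iff_left₀ hpow]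
  calc (A.card : ℝ) ^ ((3 : ℝ) + ε) * (A.card : ℝ) ^ ((3 : ℝ) - ε)
      = (A.card : ℝ) ^ (6 : ℝ) := by
        rw [← Real.rpow_add hApos]; norm_num
    _ ≤ (S.card : ℝ) * ((A.card : ℝ) ^ ((3 : ℝ) - ε) * (B.card : ℝ) ^ 2) := hkey
    _ = (B.card : ℝ) ^ 2 * (S.card : ℝ) * (A.card : ℝ) ^ ((3 : ℝ) - ε) := by ring
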